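/- Let C be the curve in C^3 defined by the monomial ideal I_{\mathbf{\mu}} = I_{\mu^1} \cap I_{\mu^2} \cap I_{\mu^3} attached to a triple of partitions not all empty. Then C is the unique torus-fixed Cohen-Macaulay (pure one-dimensional) closed subscheme of C^3 whose three outgoing partitions (given by localizing at x1, x2, x3) are \mu^1, \mu^2, \mu^3: any monomial ideal J with the same localizations and with C[x]/J of pure dimension 1 equals I_{\mathbf{\mu}}. -/

import Mathlib

/-!
STATEMENT 4: The curve `C_{μ}` defined by `I_μ = I_{μ¹} ∩ I_{μ²} ∩ I_{μ³}` is the unique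
torus-fixed Cohen-Macaulay (pure one-dimensional) subscheme of ℂ³ with outgoing
partitions μ¹,μ²,μ³: any monomial ideal `J` with the same localizations at the `x_i`
and with `ℂ[x]/J` of pure dimension 1 (all associated primes of dimension 1)
equals `I_μ`.
-/

noncomputable section

open MvPolynomial

abbrev R3 := MvPolynomial (Fin 3) ℂ

/-- `J` is a monomial ideal: it is generated by monomials. -/
def IsMonomialIdeal (J : Ideal R3) : Prop :=
  ∃ S : Set (Fin 3 →₀ ℕ), J = Ideal.span ((fun d => monomial d (1 : ℂ)) '' S)

/-- The cylinder monomial ideal `I_{μ^i} = μ[x_{i+1}, x_{i+2}] · ℂ[x₁,x₂,x₃]`. -/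
def cylinderIdeal (i : Fin 3) (μ : YoungDiagram) : Ideal R3 :=
  Ideal.span {m : R3 | ∃ a b : ℕ, (a, b) ∉ μ ∧
    m = monomial (Finsupp.single (i + 1) a + Finsupp.single (i + 2) b) (1 : ℂ)}

/-- Membership in an ideal spanned by monomials is a condition on the support. -/
lemma mem_monomialSpan_iff (S : Set (Fin 3 →₀ ℕ)) (f : R3) :
    f ∈ Ideal.span ((fun d => monomial d (1 : ℂ)) '' S) ↔
      ∀ d ∈ f.support, ∃ s ∈ S, s ≤ d := by
  classical
  constructor
  · intro hf
    let T : Ideal R3 :=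
      { carrier := {g : R3 | ∀ d ∈ g.support, ∃ s ∈ S, s ≤ d}
        add_mem' := by
          intro a b ha hb d hd
          rcases Finset.mem_union.mp (MvPolynomial.support_add hd) with h | h
          exacts [ha d h, hb d h]
        zero_mem' := by intro d hd; simp at hd
        smul_mem' := by
          intro c g hg d hd
          rw [smul_eq_mul] at hd
          have hd' := MvPolynomial.support_mul c g hd
          rcases Finset.mem_add.mp hd' with ⟨a, ha, b, hb, rfl⟩
          obtain ⟨s, hs, hsb⟩ := hg b hb
          exact ⟨s, hs, hsb.trans le_add_self⟩ }
    have hTle : Ideal.span ((fun d => monomial d (1 : ℂ)) '' S) ≤ T := by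
      rw [Ideal.span_le]
      rintro _ ⟨s, hs, rfl⟩ d hd
      rw [MvPolynomial.mem_support_iff, MvPolynomial.coeff_monomial] at hd
      by_cases h : s = d
      · exact ⟨s, hs, h.le⟩
      · simp [h] at hd
    exact hTle hf
  · intro h
    rw [MvPolynomial.as_sum f]
    apply Ideal.sum_mem
    intro d hd
    obtain ⟨s, hs, hsd⟩ := h d hd
    have hdec : monomial d (coeff d f) = monomial (d - s) (coeff d f) * monomial s 1 := by
      rw [MvPolynomial.monomial_mul, mul_one, tsub_add_cancel_of_le hsd]
    rw [hdec]
    exact Ideal.mul_mem_left _ _ (Ideal.subset_span ⟨s, hs, rfl⟩)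

lemma fin3_add_one_ne (i : Fin 3) : i + 1 ≠ i := by fin_cases i <;> decide
lemma fin3_add_two_ne (i : Fin 3) : i + 2 ≠ i := by fin_cases i <;> decide
lemma fin3_add_one_ne_add_two (i : Fin 3) : i + 1 ≠ i + 2 := by fin_cases i <;> decide

/-- Membership in the cylinder ideal: every exponent in the support lies outside the
cylinder over `μ`. -/
lemma cylinderIdeal_mem_iff (i : Fin 3) (μ : YoungDiagram) (f : R3) :
    f ∈ cylinderIdeal i μ ↔ ∀ d ∈ f.support, (d (i + 1), d (i + 2)) ∉ μ := by
  have hset : {m : R3 | ∃ a b : ℕ, (a, b) ∉ μ ∧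
      m = monomial (Finsupp.single (i + 1) a + Finsupp.single (i + 2) b) (1 : ℂ)} =
      (fun d => monomial d (1 : ℂ)) '' {d | ∃ a b : ℕ, (a, b) ∉ μ ∧
        d = Finsupp.single (i + 1) a + Finsupp.single (i + 2) b} := by
    ext m
    constructor
    · rintro ⟨a, b, hab, rfl⟩; exact ⟨_, ⟨a, b, hab, rfl⟩, rfl⟩
    · rintro ⟨d, ⟨a, b, hab, rfl⟩, rfl⟩; exact ⟨a, b, hab, rfl⟩
  rw [cylinderIdeal, hset, mem_monomialSpan_iff]
  have h12 := fin3_add_one_ne_add_two i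
  apply forall₂_congr
  intro d _
  constructor
  · rintro ⟨s, ⟨a, b, hab, rfl⟩, hsd⟩ hmem
    apply hab
    have ha : a ≤ d (i + 1) := by
      have := hsd (i + 1)
      simpa [Finsupp.single_apply, h12.symm] using this
    have hb : b ≤ d (i + 2) := by
      have := hsd (i + 2)
      simpa [Finsupp.single_apply, h12] using this
    exact μ.isLowerSet (by exact ⟨ha, hb⟩) hmem
  · intro hmem
    refine ⟨Finsupp.single (i + 1) (d (i + 1)) + Finsupp.single (i + 2) (d (i + 2)),
      ⟨d (i + 1), d (i + 2), hmem, rfl⟩, ?_⟩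
    intro j
    rcases eq_or_ne j (i + 1) with rfl | hj1
    · simp [Finsupp.single_apply, h12.symm]
    · rcases eq_or_ne j (i + 2) with rfl | hj2
      · simp [Finsupp.single_apply, h12]
      · simp [Finsupp.single_apply, Ne.symm hj1, Ne.symm hj2]

/-- The cylinder ideal is saturated with respect to `X i`. -/
lemma cylinderIdeal_sat (i : Fin 3) (μ : YoungDiagram) (f : R3) (n : ℕ)
    (h : X i ^ n * f ∈ cylinderIdeal i μ) : f ∈ cylinderIdeal i μ := by
  rw [cylinderIdeal_mem_iff] at h ⊢
  intro d hd
  have hc : coeff (Finsupp.single i n + d) (X i ^ n * f) = coeff d f := by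
    rw [X_pow_eq_monomial, MvPolynomial.coeff_monomial_mul, one_mul]
  have hmem : (Finsupp.single i n + d) ∈ (X i ^ n * f).support := by
    rw [MvPolynomial.mem_support_iff, hc]
    exact MvPolynomial.mem_support_iff.mp hd
  have h' := h _ hmem
  have e1 : (Finsupp.single i n + d) (i + 1) = d (i + 1) := by
    simp [Finsupp.single_apply, (fin3_add_one_ne i).symm]
  have e2 : (Finsupp.single i n + d) (i + 2) = d (i + 2) := by
    simp [Finsupp.single_apply, (fin3_add_two_ne i).symm]
  rwa [e1, e2] at h'

/-- Extracting a denominator: membership in the image of an ideal in the localization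
away from `X i` gives a power of `X i` multiplying into the ideal. -/
lemma exists_pow_mul_mem_of_mem_map (i : Fin 3) (K : Ideal R3) (f : R3)
    (h : algebraMap R3 (Localization.Away (X i : R3)) f ∈
      Ideal.map (algebraMap R3 (Localization.Away (X i : R3))) K) :
    ∃ n : ℕ, X i ^ n * f ∈ K := by
  rw [IsLocalization.mem_map_algebraMap_iff (Submonoid.powers (X i : R3))
    (Localization.Away (X i : R3))] at h
  obtain ⟨⟨⟨a, ha⟩, m⟩, hm⟩ := h
  obtain ⟨k, hk⟩ := (Submonoid.mem_powers_iff _ _).mp m.2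
  rw [← map_mul] at hm
  obtain ⟨c, hc⟩ := (IsLocalization.eq_iff_exists (Submonoid.powers (X i : R3))
    (Localization.Away (X i : R3))).mp hm
  obtain ⟨l, hl⟩ := (Submonoid.mem_powers_iff _ _).mp c.2
  dsimp only at hc
  refine ⟨l + k, ?_⟩
  have heq : X i ^ (l + k) * f = (c : R3) * (f * (m : R3)) := by
    rw [← hl, ← hk]; ring
  rw [heq, hc]
  exact K.mul_mem_left _ ha

lemma constantCoeff_surjective : Function.Surjective (constantCoeff : R3 →+* ℂ) :=
  fun a => ⟨C a, constantCoeff_C _ a⟩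

/-- The ideal generated by the variables is the kernel of the constant-coefficient map. -/
lemma span_X_eq_ker :
    Ideal.span (Set.range (X : Fin 3 → R3)) = RingHom.ker (constantCoeff : R3 →+* ℂ) := by
  have himg : Set.range (X : Fin 3 → R3) =
      (fun d => monomial d (1 : ℂ)) '' (Set.range fun j : Fin 3 => Finsupp.single j 1) := by
    ext m
    constructor
    · rintro ⟨j, rfl⟩
      exact ⟨Finsupp.single j 1, ⟨j, rfl⟩, rfl⟩
    · rintro ⟨d, ⟨j, rfl⟩, rfl⟩
      exact ⟨j, rfl⟩
  ext f
  rw [himg, mem_monomialSpan_iff, RingHom.mem_ker, constantCoeff_eq]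
  constructor
  · intro h
    by_contra h0
    obtain ⟨_, ⟨j, rfl⟩, hle⟩ := h 0 (MvPolynomial.mem_support_iff.mpr h0)
    have := hle j
    simp [Finsupp.single_apply] at this
  · intro h0 d hd
    have hdne : d ≠ 0 := by
      rintro rfl
      exact (MvPolynomial.mem_support_iff.mp hd) h0
    obtain ⟨j, hj⟩ := Finsupp.ne_iff.mp hdne
    refine ⟨Finsupp.single j 1, ⟨j, rfl⟩, ?_⟩
    intro x
    rcases eq_or_ne x j with rfl | hx
    · simpa [Finsupp.single_apply] using Nat.one_le_iff_ne_zero.mpr (by simpa using hj)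
    · simp [Finsupp.single_apply, Ne.symm hx]

theorem unique_CM_curve_with_outgoing_partitions
    (μ : Fin 3 → YoungDiagram) (hne : ¬ ∀ i, μ i = ⊥)
    (J : Ideal R3) (hmono : IsMonomialIdeal J)
    (hpure : ∀ p ∈ associatedPrimes R3 (R3 ⧸ J), ringKrullDim (R3 ⧸ p) = 1)
    (hloc : ∀ i : Fin 3,
      Ideal.map (algebraMap R3 (Localization.Away (X i : R3))) J =
        Ideal.map (algebraMap R3 (Localization.Away (X i : R3)))
          (cylinderIdeal i (μ i))) :
    J = ⨅ i, cylinderIdeal i (μ i) := by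
  apply le_antisymm
  · rw [le_iInf_iff]
    intro i f hf
    have h1 : algebraMap R3 (Localization.Away (X i : R3)) f ∈
        Ideal.map (algebraMap R3 (Localization.Away (X i : R3))) (cylinderIdeal i (μ i)) := by
      rw [← hloc i]
      exact Ideal.mem_map_of_mem _ hf
    obtain ⟨n, hn⟩ := exists_pow_mul_mem_of_mem_map i _ f h1
    exact cylinderIdeal_sat i (μ i) f n hn
  · intro f hf
    have key : ∀ i : Fin 3, ∃ n : ℕ, X i ^ n * f ∈ J := by
      intro i
      have h1 : algebraMap R3 (Localization.Away (X i : R3)) f ∈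
          Ideal.map (algebraMap R3 (Localization.Away (X i : R3))) J := by
        rw [hloc i]
        exact Ideal.mem_map_of_mem _ ((Submodule.mem_iInf _).mp hf i)
      exact exists_pow_mul_mem_of_mem_map i J f h1
    choose n hn using key
    by_contra hfJ
    have hx : (Ideal.Quotient.mk J f) ≠ 0 :=
      fun h => hfJ (Ideal.Quotient.eq_zero_iff_mem.mp h)
    obtain ⟨P, hP, hann⟩ :=
      exists_le_isAssociatedPrime_of_isNoetherianRing R3 (Ideal.Quotient.mk J f) hx
    have hXP : ∀ i : Fin 3, (X i : R3) ∈ P := by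
      intro i
      have hsm : (X i ^ n i : R3) • (Ideal.Quotient.mk J f) = 0 := by
        have : (X i ^ n i : R3) • (Ideal.Quotient.mk J f) =
            Ideal.Quotient.mk J (X i ^ n i * f) := rfl
        rw [this, Ideal.Quotient.eq_zero_iff_mem]
        exact hn i
      have hpow : (X i : R3) ^ n i ∈ P :=
        hann (Submodule.mem_colon_singleton.mpr (Submodule.mem_bot _ |>.mpr hsm))
      exact hP.isPrime.mem_of_pow_mem _ hpow
    have hmmax : (Ideal.span (Set.range (X : Fin 3 → R3))).IsMaximal := by
      rw [span_X_eq_ker]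
      exact RingHom.ker_isMaximal_of_surjective _ constantCoeff_surjective
    have hmle : Ideal.span (Set.range (X : Fin 3 → R3)) ≤ P := by
      rw [Ideal.span_le]
      rintro _ ⟨j, rfl⟩
      exact hXP j
    have hPeq : P = Ideal.span (Set.range (X : Fin 3 → R3)) :=
      (hmmax.eq_of_le hP.isPrime.ne_top hmle).symm
    have hdim := hpure P hP
    rw [hPeq, span_X_eq_ker,
      ringKrullDim_eq_of_ringEquiv
        (RingHom.quotientKerEquivOfSurjective constantCoeff_surjective),
      ringKrullDim_eq_zero_of_field] at hdim
    exact absurd hdim (by simp)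

end
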